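/- arXiv:2201.09267 — 4 statements merged into one kernel-verified Lean document; each statement's English description precedes it below -/
import Mathlib

section
/- Let Σ_S, Σ_D ∈ ℝ^{d×d} be symmetric matrices with Σ_S positive definite and Σ_D positive semidefinite and nonzero. Then the trace-ratio objective tr(W Σ_D) / tr(W Σ_S) over symmetric positive semidefinite W is maximized by a rank-one matrix: there exists u ∈ ℝ^d with u ≠ 0 such that for every symmetric positive semidefinite matrix W ≠ 0, tr(W Σ_D) / tr(W Σ_S) ≤ (uᵀ Σ_D u) / (uᵀ Σ_S u). (Note that for W = u uᵀ the ratio equals (uᵀ Σ_D u)/(uᵀ Σ_S u), so the supremum is attained at a rank-one positive semidefinite matrix.) -/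
open Matrix

section SqrtAux

open scoped MatrixOrder

noncomputable def Matrix.PosSemidef.sqrt {d : ℕ} {W : Matrix (Fin d) (Fin d) ℝ}
    (_hW : W.PosSemidef) : Matrix (Fin d) (Fin d) ℝ :=
  CFC.sqrt W

lemma Matrix.PosSemidef.posSemidef_sqrt {d : ℕ} {W : Matrix (Fin d) (Fin d) ℝ}
    (hW : W.PosSemidef) : hW.sqrt.PosSemidef :=
  Matrix.nonneg_iff_posSemidef.mp (CFC.sqrt_nonneg W)

lemma Matrix.PosSemidef.sqrt_mul_self {d : ℕ} {W : Matrix (Fin d) (Fin d) ℝ}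
    (hW : W.PosSemidef) : hW.sqrt * hW.sqrt = W :=
  CFC.sqrt_mul_sqrt_self W (Matrix.nonneg_iff_posSemidef.mpr hW)

end SqrtAux

namespace TraceRatioAux

variable {d : ℕ}

lemma quad_eq_trace (u : Fin d → ℝ) (A : Matrix (Fin d) (Fin d) ℝ) :
    (vecMulVec u u * A).trace = u ⬝ᵥ A.mulVec u := by
  simp only [Matrix.trace, Matrix.diag, Matrix.mul_apply, vecMulVec_apply,
    dotProduct, Matrix.mulVec, Finset.mul_sum]
  rw [Finset.sum_comm]
  refine Finset.sum_congr rfl fun i _ => Finset.sum_congr rfl fun j _ => ?_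
  ring

lemma psd_trace_nonneg {A : Matrix (Fin d) (Fin d) ℝ} (hA : A.PosSemidef) :
    0 ≤ A.trace := by
  rw [Matrix.trace]
  refine Finset.sum_nonneg fun i _ => ?_
  have := hA.dotProduct_mulVec_nonneg (Pi.single i 1)
  simpa [dotProduct, Matrix.mulVec, Pi.single_apply, Finset.sum_ite_eq] using this

lemma trace_mul_nonneg {W M : Matrix (Fin d) (Fin d) ℝ}
    (hW : W.PosSemidef) (hM : M.PosSemidef) : 0 ≤ (W * M).trace := by
  have h2 : (W * M).trace = (hW.sqrtᴴ * M * hW.sqrt).trace := by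
    rw [hW.posSemidef_sqrt.1.eq, Matrix.trace_mul_cycle, hW.sqrt_mul_self]
  rw [h2]
  exact psd_trace_nonneg (hM.conjTranspose_mul_mul_same _)

lemma trace_mul_pos {W S : Matrix (Fin d) (Fin d) ℝ}
    (hW : W.PosSemidef) (hW0 : W ≠ 0) (hS : S.PosDef) : 0 < (W * S).trace := by
  set B := hW.sqrt with hB
  have h2 : (W * S).trace = (Bᴴ * S * B).trace := by
    rw [hW.posSemidef_sqrt.1.eq, Matrix.trace_mul_cycle, hW.sqrt_mul_self]
  have hdiag : ∀ i, (Bᴴ * S * B) i i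
      = (fun j => B j i) ⬝ᵥ S.mulVec (fun j => B j i) := by
    intro i
    simp only [Matrix.mul_apply, dotProduct, Matrix.mulVec, conjTranspose_apply,
      Finset.sum_mul, Finset.mul_sum, star_trivial]
    rw [Finset.sum_comm]
    refine Finset.sum_congr rfl fun k _ => Finset.sum_congr rfl fun j _ => ?_
    ring
  have hBne : B ≠ 0 := by
    intro h
    apply hW0
    rw [← hW.sqrt_mul_self, ← hB, h, Matrix.mul_zero]
  obtain ⟨i0, j0, hij⟩ : ∃ i j, B i j ≠ 0 := by
    by_contra h
    push_neg at h
    exact hBne (by ext i j; simpa using h i j)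
  rw [h2, Matrix.trace]
  refine Finset.sum_pos' (fun i _ => ?_) ⟨j0, Finset.mem_univ _, ?_⟩
  · rw [Matrix.diag_apply, hdiag]
    have := (hS.posSemidef).dotProduct_mulVec_nonneg (fun j => B j i)
    simpa using this
  · rw [Matrix.diag_apply, hdiag]
    have hc : (fun j => B j j0) ≠ 0 := fun h => hij (congrFun h i0)
    have := hS.dotProduct_mulVec_pos hc
    simpa using this

lemma quad_smul (A : Matrix (Fin d) (Fin d) ℝ) (c : ℝ) (v : Fin d → ℝ) :
    (c • v) ⬝ᵥ A.mulVec (c • v) = c ^ 2 * (v ⬝ᵥ A.mulVec v) := by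
  rw [Matrix.mulVec_smul, dotProduct_smul, smul_dotProduct, smul_eq_mul, smul_eq_mul]
  ring

lemma quad_continuous (A : Matrix (Fin d) (Fin d) ℝ) :
    Continuous fun v : Fin d → ℝ => v ⬝ᵥ A.mulVec v := by
  simp only [dotProduct, Matrix.mulVec]
  exact continuous_finset_sum _ fun i _ =>
    (continuous_apply i).mul (continuous_finset_sum _ fun j _ =>
      continuous_const.mul (continuous_apply j))

end TraceRatioAux

open TraceRatioAux


/-- For symmetric matrices `Σ_S` positive definite and `Σ_D` positive
semidefinite and nonzero, the trace-ratio objective `tr(W Σ_D)/tr(W Σ_S)` over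
nonzero symmetric positive semidefinite `W` is maximized by a rank-one matrix:
there is a nonzero vector `u` bounding the ratio by `(uᵀ Σ_D u)/(uᵀ Σ_S u)`,
and for `W = u uᵀ` the ratio attains this value. -/
theorem trace_ratio_rank_one_maximizer (d : ℕ)
    (SigS SigD : Matrix (Fin d) (Fin d) ℝ)
    (hS : SigS.PosDef) (hD : SigD.PosSemidef) (hD0 : SigD ≠ 0) :
    ∃ u : Fin d → ℝ, u ≠ 0 ∧
      (∀ W : Matrix (Fin d) (Fin d) ℝ, W.PosSemidef → W ≠ 0 →
        (W * SigD).trace / (W * SigS).trace ≤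
          (u ⬝ᵥ SigD.mulVec u) / (u ⬝ᵥ SigS.mulVec u)) ∧
      (vecMulVec u u * SigD).trace / (vecMulVec u u * SigS).trace
        = (u ⬝ᵥ SigD.mulVec u) / (u ⬝ᵥ SigS.mulVec u) := by
  classical
  have hd : 0 < d := by
    rcases Nat.eq_zero_or_pos d with h | h
    · exact absurd (by subst h; ext i j; exact i.elim0) hD0
    · exact h
  haveI : Nonempty (Fin d) := ⟨⟨0, hd⟩⟩
  set f : (Fin d → ℝ) → ℝ :=
    fun v => (v ⬝ᵥ SigD.mulVec v) / (v ⬝ᵥ SigS.mulVec v) with hf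
  have hqS : ∀ v : Fin d → ℝ, v ≠ 0 → 0 < v ⬝ᵥ SigS.mulVec v := by
    intro v hv
    simpa using hS.dotProduct_mulVec_pos hv
  have hcont : ContinuousOn f (Metric.sphere (0 : Fin d → ℝ) 1) := by
    apply ContinuousOn.div (quad_continuous SigD).continuousOn
      (quad_continuous SigS).continuousOn
    intro x hx
    have hx0 : x ≠ 0 := by
      have : ‖x‖ = 1 := by simpa using hx
      simpa [this] using (norm_ne_zero_iff.mp (by rw [this]; norm_num) : x ≠ 0)
    exact (hqS x hx0).ne'
  have hne : (Metric.sphere (0 : Fin d → ℝ) 1).Nonempty :=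
    NormedSpace.sphere_nonempty.mpr zero_le_one
  obtain ⟨u, hu_mem, hu_max⟩ :=
    (isCompact_sphere (0 : Fin d → ℝ) 1).exists_isMaxOn hne hcont
  have hu_norm : ‖u‖ = 1 := by simpa using hu_mem
  have hu0 : u ≠ 0 := by
    intro h
    rw [h] at hu_norm
    simp at hu_norm
  -- scale invariance
  have hscale : ∀ (c : ℝ), c ≠ 0 → ∀ v, f (c • v) = f v := by
    intro c hc v
    rw [hf]
    simp only [quad_smul]
    exact mul_div_mul_left _ _ (pow_ne_zero 2 hc)
  -- key bound
  have hbound : ∀ v : Fin d → ℝ, v ⬝ᵥ SigD.mulVec v ≤ f u * (v ⬝ᵥ SigS.mulVec v) := by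
    intro v
    by_cases hv : v = 0
    · subst hv
      simp
    · have hnv : ‖v‖ ≠ 0 := norm_ne_zero_iff.mpr hv
      have hw_mem : (‖v‖⁻¹ • v) ∈ Metric.sphere (0 : Fin d → ℝ) 1 := by
        simp [norm_smul, abs_of_nonneg (norm_nonneg v), inv_mul_cancel₀ hnv]
      have h1 : f (‖v‖⁻¹ • v) ≤ f u := hu_max hw_mem
      rw [hscale _ (inv_ne_zero hnv) v] at h1
      have := hqS v hv
      rw [hf] at h1
      exact (div_le_iff₀ this).mp h1
  refine ⟨u, hu0, ?_, ?_⟩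
  · intro W hW hW0
    have hden : 0 < (W * SigS).trace := trace_mul_pos hW hW0 hS
    -- M := f u • SigS - SigD is PSD
    have hMpsd : (f u • SigS - SigD).PosSemidef := by
      refine Matrix.PosSemidef.of_dotProduct_mulVec_nonneg ?_ ?_
      · have h1 : SigSᴴ = SigS := hS.1
        have h2 : SigDᴴ = SigD := hD.1
        show (f u • SigS - SigD)ᴴ = _
        rw [conjTranspose_sub, conjTranspose_smul, h1, h2, star_trivial]
      · intro x
        have := hbound x
        simp only [Matrix.sub_mulVec, Matrix.smul_mulVec, dotProduct_sub,
          dotProduct_smul, smul_eq_mul, star_trivial]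
        linarith
    have htr : 0 ≤ (W * (f u • SigS - SigD)).trace := trace_mul_nonneg hW hMpsd
    rw [Matrix.mul_sub, Matrix.mul_smul, Matrix.trace_sub, Matrix.trace_smul,
      smul_eq_mul] at htr
    rw [div_le_div_iff₀ hden (hqS u hu0)]
    have h2 : (W * SigD).trace ≤ f u * (W * SigS).trace := by linarith
    have := mul_le_mul_of_nonneg_right h2 (le_of_lt (hqS u hu0))
    calc (W * SigD).trace * (u ⬝ᵥ SigS.mulVec u)
        ≤ f u * (W * SigS).trace * (u ⬝ᵥ SigS.mulVec u) := this
      _ = (u ⬝ᵥ SigD.mulVec u) * (W * SigS).trace := by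
          rw [hf, div_mul_eq_mul_div, div_mul_cancel₀ _ (hqS u hu0).ne']
  · rw [quad_eq_trace, quad_eq_trace]
end

section
/- Let Φ ∈ ℝ^{D×n} be a matrix with columns φ_1, …, φ_n, let T ∈ ℝ^{n×p}, and set U := Φ T and K := Φᵀ Φ with columns k_1, …, k_n (so k_i = Φᵀ φ_i). Then for all indices i, j, the generalized Mahalanobis distance in the feature space with weight matrix U Uᵀ equals a generalized Mahalanobis distance between kernel vectors with weight matrix T Tᵀ: (φ_i − φ_j)ᵀ (U Uᵀ) (φ_i − φ_j) = (k_i − k_j)ᵀ (T Tᵀ) (k_i − k_j). -/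
open Matrix

/-- Kernelization of the generalized Mahalanobis distance: with `U = Φ T`,
`K = Φᵀ Φ`, columns `φ_i = Φᵀ i` and kernel vectors `k_i = Kᵀ i = Φᵀ φ_i`,
the distance in feature space with weight `U Uᵀ` equals the distance between
kernel vectors with weight `T Tᵀ`:
`(φ_i − φ_j)ᵀ (U Uᵀ) (φ_i − φ_j) = (k_i − k_j)ᵀ (T Tᵀ) (k_i − k_j)`. -/
theorem kernelized_mahalanobis (D n p : ℕ)
    (Φ : Matrix (Fin D) (Fin n) ℝ) (T : Matrix (Fin n) (Fin p) ℝ) :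
    ∀ i j : Fin n,
      (Φᵀ i - Φᵀ j) ⬝ᵥ (((Φ * T) * (Φ * T)ᵀ).mulVec (Φᵀ i - Φᵀ j)) =
        ((Φᵀ * Φ)ᵀ i - (Φᵀ * Φ)ᵀ j) ⬝ᵥ
          ((T * Tᵀ).mulVec ((Φᵀ * Φ)ᵀ i - (Φᵀ * Φ)ᵀ j)) := by
  intro i j
  have hk : ∀ i : Fin n, (Φᵀ * Φ)ᵀ i = Φᵀ.mulVec (Φᵀ i) := by
    intro i
    funext l
    simp [Matrix.mul_apply, Matrix.mulVec, dotProduct, mul_comm]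
  have hx : (Φᵀ * Φ)ᵀ i - (Φᵀ * Φ)ᵀ j = Φᵀ.mulVec (Φᵀ i - Φᵀ j) := by
    rw [hk, hk, Matrix.mulVec_sub]
  rw [hx]
  set x := Φᵀ i - Φᵀ j with hxdef
  have h1 : ((Φ * T) * (Φ * T)ᵀ) = Φ * ((T * Tᵀ) * Φᵀ) := by
    simp [Matrix.transpose_mul, Matrix.mul_assoc]
  rw [h1, ← Matrix.mulVec_mulVec, Matrix.dotProduct_mulVec,
    ← Matrix.mulVec_transpose, ← Matrix.mulVec_mulVec]
end

section
/- Let x_1, …, x_n ∈ ℝ^d with n ≥ 2, and let p⁰_{ij} ≥ 0 for all ordered pairs i ≠ j. For W ∈ ℝ^{d×d}, define r_{ij}(W) := (x_i − x_j)ᵀ W (x_i − x_j) and Z_i(W) := Σ_{k ≠ i} exp(−r_{ik}(W)). Then the collapsing-classes objective W ↦ Σ_{i ≠ j} p⁰_{ij} (r_{ij}(W) + log Z_i(W)) is a convex function on the real vector space of d×d matrices. -/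
open Matrix Finset

/-- Sum of convex functions over a finset is convex. -/
lemma convexOn_finset_sum' {ι E : Type*} [AddCommGroup E] [Module ℝ E]
    (s : Finset ι) (f : ι → E → ℝ) (h : ∀ i ∈ s, ConvexOn ℝ Set.univ (f i)) :
    ConvexOn ℝ Set.univ (fun v => ∑ i ∈ s, f i v) := by
  induction s using Finset.cons_induction with
  | empty => simpa using convexOn_const (0 : ℝ) convex_univ
  | cons i s hi ih =>
    simp only [Finset.sum_cons]
    exact (h i (Finset.mem_cons_self i s)).add
      (ih fun j hj => h j (Finset.mem_cons_of_mem hj))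

/-- Log-sum-exp of a family of linear maps is convex (nonempty index set). -/
lemma logsumexp_convexOn {E ι : Type*} [AddCommGroup E] [Module ℝ E]
    (s : Finset ι) (hs : s.Nonempty) (L : ι → E →ₗ[ℝ] ℝ) :
    ConvexOn ℝ Set.univ (fun v => Real.log (∑ k ∈ s, Real.exp (L k v))) := by
  refine ⟨convex_univ, fun v _ w _ a b ha hb hab => ?_⟩
  have hZ : ∀ u : E, 0 < ∑ k ∈ s, Real.exp (L k u) := fun u =>
    Finset.sum_pos (fun k _ => Real.exp_pos _) hs
  rcases ha.eq_or_lt with rfl | ha'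
  · simp only [zero_add] at hab; simp [hab]
  rcases hb.eq_or_lt with rfl | hb'
  · simp only [add_zero] at hab; simp [hab]
  have hpq : Real.HolderConjugate (1/a) (1/b) := by
    constructor
    · rw [one_div, one_div, inv_inv, inv_inv, inv_one]; exact hab
    · positivity
    · positivity
  have key : ∑ k ∈ s, Real.exp (L k (a • v + b • w)) ≤
      (∑ k ∈ s, Real.exp (L k v)) ^ a * (∑ k ∈ s, Real.exp (L k w)) ^ b := by
    calc ∑ k ∈ s, Real.exp (L k (a • v + b • w))
        = ∑ k ∈ s, Real.exp (a * L k v) * Real.exp (b * L k w) := by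
          refine Finset.sum_congr rfl fun k _ => ?_
          rw [map_add, _root_.map_smul, _root_.map_smul, smul_eq_mul, smul_eq_mul, Real.exp_add]
      _ ≤ (∑ k ∈ s, Real.exp (a * L k v) ^ (1/a)) ^ (1/(1/a)) *
            (∑ k ∈ s, Real.exp (b * L k w) ^ (1/b)) ^ (1/(1/b)) :=
          Real.inner_le_Lp_mul_Lq_of_nonneg s hpq
            (fun k _ => (Real.exp_pos _).le) (fun k _ => (Real.exp_pos _).le)
      _ = (∑ k ∈ s, Real.exp (L k v)) ^ a * (∑ k ∈ s, Real.exp (L k w)) ^ b := by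
          rw [one_div_one_div, one_div_one_div]
          congr 2 <;> refine Finset.sum_congr rfl fun k _ => ?_
          · rw [← Real.exp_mul, mul_one_div, mul_div_cancel_left₀ _ ha'.ne']
          · rw [← Real.exp_mul, mul_one_div, mul_div_cancel_left₀ _ hb'.ne']
  calc Real.log (∑ k ∈ s, Real.exp (L k (a • v + b • w)))
      ≤ Real.log ((∑ k ∈ s, Real.exp (L k v)) ^ a * (∑ k ∈ s, Real.exp (L k w)) ^ b) :=
        Real.log_le_log (hZ _) key
    _ = a * Real.log (∑ k ∈ s, Real.exp (L k v)) +
          b * Real.log (∑ k ∈ s, Real.exp (L k w)) := by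
        rw [Real.log_mul (Real.rpow_pos_of_pos (hZ v) a).ne'
          (Real.rpow_pos_of_pos (hZ w) b).ne',
          Real.log_rpow (hZ v), Real.log_rpow (hZ w)]
    _ = a • Real.log (∑ k ∈ s, Real.exp (L k v)) +
          b • Real.log (∑ k ∈ s, Real.exp (L k w)) := by simp [smul_eq_mul]

/-- The quadratic form `W ↦ uᵀ W u` as a linear map in `W`. -/
def quadLin {d : ℕ} (u : Fin d → ℝ) : Matrix (Fin d) (Fin d) ℝ →ₗ[ℝ] ℝ where
  toFun W := u ⬝ᵥ W.mulVec u
  map_add' A B := by simp [Matrix.add_mulVec, dotProduct_add]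
  map_smul' c A := by simp [Matrix.smul_mulVec]

/-- The collapsing-classes objective
`W ↦ Σ_{i ≠ j} p⁰_{ij} (r_{ij}(W) + log Z_i(W))`, with
`r_{ij}(W) = (x_i − x_j)ᵀ W (x_i − x_j)` and
`Z_i(W) = Σ_{k ≠ i} exp(−r_{ik}(W))`, is convex on the space of real `d×d`
matrices. -/
theorem collapsing_classes_convex (d n : ℕ) (hn : 2 ≤ n)
    (x : Fin n → Fin d → ℝ) (p0 : Fin n → Fin n → ℝ)
    (h0 : ∀ i j, i ≠ j → 0 ≤ p0 i j) :
    ConvexOn ℝ Set.univ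
      (fun W : Matrix (Fin d) (Fin d) ℝ =>
        ∑ i, ∑ j ∈ Finset.univ.erase i,
          p0 i j * ((x i - x j) ⬝ᵥ W.mulVec (x i - x j) +
            Real.log (∑ k ∈ Finset.univ.erase i,
              Real.exp (-((x i - x k) ⬝ᵥ W.mulVec (x i - x k)))))) := by
  refine convexOn_finset_sum' _ _ fun i _ => convexOn_finset_sum' _ _ fun j hj => ?_
  have hji : j ≠ i := Finset.ne_of_mem_erase hj
  have hne : (Finset.univ.erase i).Nonempty := ⟨j, hj⟩
  have hlog : ConvexOn ℝ Set.univ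
      (fun W : Matrix (Fin d) (Fin d) ℝ => Real.log (∑ k ∈ Finset.univ.erase i,
        Real.exp (-((x i - x k) ⬝ᵥ W.mulVec (x i - x k))))) := by
    have := logsumexp_convexOn (E := Matrix (Fin d) (Fin d) ℝ) _ hne
      (fun k => -(quadLin (x i - x k)))
    simpa [quadLin] using this
  have hquad : ConvexOn ℝ Set.univ
      (fun W : Matrix (Fin d) (Fin d) ℝ => (x i - x j) ⬝ᵥ W.mulVec (x i - x j)) :=
    (quadLin (x i - x j)).convexOn convex_univ
  exact (hquad.add hlog).smul (h0 i j hji.symm)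
end

section
/- Let x_1, …, x_n ∈ ℝ^d, and for each i let S_i ⊆ {1,…,n} \ {i} be a set of indices of similar points. For U ∈ ℝ^{d×p}, define r_{ij}(U) := ‖Uᵀ(x_i − x_j)‖₂², p_{ij}(U) := exp(−r_{ij}(U)) / Σ_{k ≠ i} exp(−r_{ik}(U)) for j ≠ i, p_i(U) := Σ_{j ∈ S_i} p_{ij}(U), and the NCA objective f(U) := Σ_{i=1}^n p_i(U). Let A_{ij} := (x_i − x_j)(x_i − x_j)ᵀ. Then f is Fréchet differentiable at every U, and its gradient (the matrix G ∈ ℝ^{d×p} such that the derivative in direction H is Σ_{k,l} G_{kl} H_{kl}) equals G = 2 Σ_{i=1}^n ( p_i(U) Σ_{k ≠ i} p_{ik}(U) A_{ik} − Σ_{j ∈ S_i} p_{ij}(U) A_{ij} ) U. -/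
open Matrix Finset

/-- Squared in-subspace distance `r_{ij}(U) = ‖Uᵀ(x_i − x_j)‖₂²`. -/
noncomputable def ncaR {d p n : ℕ} (x : Fin n → Fin d → ℝ)
    (U : Fin d → Fin p → ℝ) (i j : Fin n) : ℝ :=
  ∑ l, (∑ k, U k l * (x i k - x j k)) ^ 2

/-- NCA softmax neighborhood probability
`p_{ij}(U) = exp(−r_{ij}(U)) / Σ_{k ≠ i} exp(−r_{ik}(U))` (for `j ≠ i`). -/
noncomputable def ncaP {d p n : ℕ} (x : Fin n → Fin d → ℝ)
    (U : Fin d → Fin p → ℝ) (i j : Fin n) : ℝ :=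
  Real.exp (-(ncaR x U i j)) /
    ∑ k ∈ Finset.univ.erase i, Real.exp (-(ncaR x U i k))

noncomputable def ncaLin {d p : ℕ} (c : Fin d → ℝ) (l : Fin p) : (Fin d → Fin p → ℝ) →L[ℝ] ℝ :=
  ∑ k, c k • ((ContinuousLinearMap.proj (R := ℝ) (φ := fun _ : Fin p => ℝ) l).comp
    (ContinuousLinearMap.proj (R := ℝ) (φ := fun _ : Fin d => Fin p → ℝ) k))

lemma ncaLin_apply {d p : ℕ} (c : Fin d → ℝ) (l : Fin p) (H : Fin d → Fin p → ℝ) :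
    ncaLin c l H = ∑ k, c k * H k l := by
  simp [ncaLin]

noncomputable def ncaRder {d p n : ℕ} (x : Fin n → Fin d → ℝ)
    (U : Fin d → Fin p → ℝ) (i j : Fin n) : (Fin d → Fin p → ℝ) →L[ℝ] ℝ :=
  ∑ l, (2 * ∑ k, U k l * (x i k - x j k)) • ncaLin (fun k => x i k - x j k) l

lemma key1 {d p n : ℕ} (x : Fin n → Fin d → ℝ) (U H : Fin d → Fin p → ℝ) (i j : Fin n) :
    ncaRder x U i j H
      = ∑ a, ∑ b, 2 * (∑ c, ((x i a - x j a) * (x i c - x j c)) * U c b) * H a b := by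
  have h0 : ncaRder x U i j H
      = ∑ l, (2 * ∑ k, U k l * (x i k - x j k)) * (∑ k, (x i k - x j k) * H k l) := by
    simp [ncaRder, ncaLin_apply, ContinuousLinearMap.sum_apply]
  rw [h0]
  have h1 : ∀ l : Fin p, (2 * ∑ k, U k l * (x i k - x j k)) * (∑ k, (x i k - x j k) * H k l)
      = ∑ a, 2 * (∑ c, ((x i a - x j a) * (x i c - x j c)) * U c l) * H a l := by
    intro l
    simp only [Finset.mul_sum, Finset.sum_mul]
    refine Finset.sum_congr rfl fun a _ => Finset.sum_congr rfl fun c _ => by ring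
  exact (Finset.sum_congr rfl fun l _ => h1 l).trans Finset.sum_comm

lemma key2 {d p n : ℕ} (x : Fin n → Fin d → ℝ) (U H : Fin d → Fin p → ℝ) (i : Fin n)
    (t : Finset (Fin n)) (w : Fin n → ℝ) :
    ∑ j ∈ t, w j * ncaRder x U i j H
      = ∑ a, ∑ b, 2 * (∑ c, (∑ j ∈ t, w j * ((x i a - x j a) * (x i c - x j c))) * U c b) * H a b := by
  have h0 : ∑ j ∈ t, w j * ncaRder x U i j H
      = ∑ j ∈ t, ∑ a, ∑ b, w j * (2 * (∑ c, ((x i a - x j a) * (x i c - x j c)) * U c b) * H a b) := by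
    refine Finset.sum_congr rfl fun j _ => ?_
    rw [key1 x U H i j, Finset.mul_sum]
    exact Finset.sum_congr rfl fun a _ => by rw [Finset.mul_sum]
  rw [h0, Finset.sum_comm]
  refine Finset.sum_congr rfl fun a _ => ?_
  rw [Finset.sum_comm]
  refine Finset.sum_congr rfl fun b _ => ?_
  simp only [Finset.sum_mul, Finset.mul_sum]
  rw [Finset.sum_comm]
  exact Finset.sum_congr rfl fun c _ => Finset.sum_congr rfl fun j _ => by ring

lemma myDiv {E : Type*} [NormedAddCommGroup E] [NormedSpace ℝ E]
    {f g : E → ℝ} {f' g' : E →L[ℝ] ℝ} {x : E}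
    (hf : HasFDerivAt f f' x) (hg : HasFDerivAt g g' x) (h : g x ≠ 0) :
    HasFDerivAt (fun y => f y / g y)
      ((g x)⁻¹ • f' - (f x / g x ^ 2) • g') x := by
  have h2 : HasFDerivAt (fun y => (g y)⁻¹) ((-(g x ^ 2)⁻¹) • g') x :=
    (hasDerivAt_inv h).comp_hasFDerivAt x hg
  have hmul := hf.fun_mul h2
  simp only [div_eq_mul_inv]
  refine hmul.congr_fderiv ?_
  ext H
  simp only [ContinuousLinearMap.coe_smul', ContinuousLinearMap.coe_sub', Pi.smul_apply,
    Pi.sub_apply, ContinuousLinearMap.add_apply, smul_eq_mul, ContinuousLinearMap.coe_add']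
  field_simp
  ring


lemma hasFDerivAt_ncaR {d p n : ℕ} (x : Fin n → Fin d → ℝ)
    (U : Fin d → Fin p → ℝ) (i j : Fin n) :
    HasFDerivAt (fun V => ncaR x V i j) (ncaRder x U i j) U := by
  set c : Fin d → ℝ := fun k => x i k - x j k with hc
  have h1 : ∀ l : Fin p, HasFDerivAt (fun V : Fin d → Fin p → ℝ => ncaLin c l V * ncaLin c l V)
      ((2 * ncaLin c l U) • ncaLin c l) U := by
    intro l
    have := ((ncaLin c l).hasFDerivAt (x := U)).fun_mul ((ncaLin c l).hasFDerivAt (x := U))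
    refine this.congr_fderiv ?_
    ext H
    simp only [ContinuousLinearMap.coe_smul', Pi.smul_apply, smul_eq_mul,
      ContinuousLinearMap.add_apply, ContinuousLinearMap.coe_add']
    ring
  have h2 : HasFDerivAt (fun V : Fin d → Fin p → ℝ => ∑ l, ncaLin c l V * ncaLin c l V)
      (∑ l, (2 * ncaLin c l U) • ncaLin c l) U := HasFDerivAt.fun_sum (fun l _ => h1 l)
  have he : (fun V : Fin d → Fin p → ℝ => ncaR x V i j)
      = fun V => ∑ l, ncaLin c l V * ncaLin c l V := by
    funext V
    simp [ncaR, ncaLin_apply, sq, mul_comm, hc]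
  have he2 : ncaRder x U i j = ∑ l, (2 * ncaLin c l U) • ncaLin c l := by
    simp [ncaRder, ncaLin_apply, mul_comm, hc]
  rw [he, he2]
  exact h2



noncomputable def Efun {d p n : ℕ} (x : Fin n → Fin d → ℝ) (U : Fin d → Fin p → ℝ) (i j : Fin n) : ℝ :=
  Real.exp (-(ncaR x U i j))

noncomputable def Dfun {d p n : ℕ} (x : Fin n → Fin d → ℝ) (U : Fin d → Fin p → ℝ) (i : Fin n) : ℝ :=
  ∑ k ∈ Finset.univ.erase i, Efun x U i k

lemma ncaP_eq {d p n : ℕ} (x : Fin n → Fin d → ℝ) (U : Fin d → Fin p → ℝ) (i j : Fin n) :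
    ncaP x U i j = Efun x U i j / Dfun x U i := rfl

lemma divstep (a r T Dv : ℝ) (hD : Dv ≠ 0) :
    Dv⁻¹ * (a * -r) - a / Dv ^ 2 * -T = a / Dv * (T / Dv) - a / Dv * r := by
  field_simp; ring


/-- The NCA objective `f(U) = Σᵢ pᵢ(U)`, with `pᵢ(U) = Σ_{j ∈ Sᵢ} p_{ij}(U)`,
is Fréchet differentiable at every `U ∈ ℝ^{d×p}`, and its gradient matrix is
`G = 2 Σᵢ ( pᵢ(U) Σ_{k ≠ i} p_{ik}(U) A_{ik} − Σ_{j ∈ Sᵢ} p_{ij}(U) A_{ij} ) U`,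
where `A_{ij} = (x_i − x_j)(x_i − x_j)ᵀ`; i.e. the derivative in direction `H`
equals `Σ_{k,l} G_{kl} H_{kl}`. -/
theorem nca_gradient (d p n : ℕ) (x : Fin n → Fin d → ℝ)
    (S : Fin n → Finset (Fin n)) (hS : ∀ i, i ∉ S i) :
    ∀ U : Fin d → Fin p → ℝ,
      DifferentiableAt ℝ
        (fun V : Fin d → Fin p → ℝ => ∑ i, ∑ j ∈ S i, ncaP x V i j) U ∧
      ∀ H : Fin d → Fin p → ℝ,
        fderiv ℝ (fun V : Fin d → Fin p → ℝ => ∑ i, ∑ j ∈ S i, ncaP x V i j) U H =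
          ∑ a, ∑ b,
            ((2 : ℝ) • ∑ i,
              (((∑ j ∈ S i, ncaP x U i j) •
                  ∑ k ∈ Finset.univ.erase i,
                    ncaP x U i k • vecMulVec (x i - x k) (x i - x k))
                - ∑ j ∈ S i, ncaP x U i j • vecMulVec (x i - x j) (x i - x j))
                * Matrix.of U) a b * H a b := by
  intro U
  have hEder : ∀ i j : Fin n, HasFDerivAt (fun V => Real.exp (-(ncaR x V i j)))
      (Efun x U i j • (-(ncaRder x U i j))) U :=
    fun i j => ((hasFDerivAt_ncaR x U i j).neg).exp
  have hDder : ∀ i : Fin n, HasFDerivAt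
      (fun V => ∑ k ∈ Finset.univ.erase i, Real.exp (-(ncaR x V i k)))
      (∑ k ∈ Finset.univ.erase i, Efun x U i k • (-(ncaRder x U i k))) U :=
    fun i => HasFDerivAt.fun_sum (fun k _ => hEder i k)
  have hDpos : ∀ i j, j ∈ S i → 0 < Dfun x U i := by
    intro i j hj
    have hji : j ∈ Finset.univ.erase i := by
      refine Finset.mem_erase.mpr ⟨?_, Finset.mem_univ _⟩
      intro h; exact hS i (h ▸ hj)
    exact Finset.sum_pos' (fun k _ => (Real.exp_pos _).le) ⟨j, hji, Real.exp_pos _⟩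
  set F' : (Fin d → Fin p → ℝ) →L[ℝ] ℝ :=
    ∑ i, ∑ j ∈ S i, ((Dfun x U i)⁻¹ • (Efun x U i j • (-(ncaRder x U i j)))
      - (Efun x U i j / (Dfun x U i) ^ 2) •
          (∑ k ∈ Finset.univ.erase i, Efun x U i k • (-(ncaRder x U i k)))) with hF'
  have main : HasFDerivAt (fun V : Fin d → Fin p → ℝ => ∑ i, ∑ j ∈ S i, ncaP x V i j) F' U := by
    rw [hF']
    refine HasFDerivAt.fun_sum (fun i _ => HasFDerivAt.fun_sum (fun j hj => ?_))
    exact myDiv (hEder i j) (hDder i) (ne_of_gt (hDpos i j hj))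
  refine ⟨main.differentiableAt, fun H => ?_⟩
  rw [main.fderiv]
  have hLHS : F' H = ∑ i, ((∑ j ∈ S i, ncaP x U i j) *
      (∑ k ∈ Finset.univ.erase i, ncaP x U i k * ncaRder x U i k H)
      - ∑ j ∈ S i, ncaP x U i j * ncaRder x U i j H) := by
    rw [hF']
    simp only [ContinuousLinearMap.sum_apply, ContinuousLinearMap.coe_sub',
      Pi.sub_apply, ContinuousLinearMap.coe_smul', Pi.smul_apply, smul_eq_mul,
      ContinuousLinearMap.neg_apply]
    refine Finset.sum_congr rfl (fun i _ => ?_)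
    have hstep : ∀ j ∈ S i,
        (Dfun x U i)⁻¹ * (Efun x U i j * -(ncaRder x U i j) H)
          - Efun x U i j / Dfun x U i ^ 2 *
            ∑ k ∈ Finset.univ.erase i, Efun x U i k * -(ncaRder x U i k) H
        = ncaP x U i j * (∑ k ∈ Finset.univ.erase i, ncaP x U i k * ncaRder x U i k H)
          - ncaP x U i j * ncaRder x U i j H := by
      intro j hj
      have hDne : Dfun x U i ≠ 0 := (hDpos i j hj).ne'
      have hneg : ∑ k ∈ Finset.univ.erase i, Efun x U i k * -(ncaRder x U i k) H
          = -∑ k ∈ Finset.univ.erase i, Efun x U i k * ncaRder x U i k H := by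
        rw [← Finset.sum_neg_distrib]
        exact Finset.sum_congr rfl fun k _ => by ring
      have hsum : ∑ k ∈ Finset.univ.erase i, ncaP x U i k * ncaRder x U i k H
          = (∑ k ∈ Finset.univ.erase i, Efun x U i k * ncaRder x U i k H) / Dfun x U i := by
        rw [Finset.sum_div]
        exact Finset.sum_congr rfl fun k _ => by rw [ncaP_eq, div_mul_eq_mul_div]
      rw [hneg, hsum, ncaP_eq]
      exact divstep _ _ _ _ hDne
    rw [Finset.sum_congr rfl hstep, Finset.sum_sub_distrib, ← Finset.sum_mul]
  rw [hLHS]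
  simp only [Matrix.smul_apply, Matrix.sum_apply, Matrix.mul_apply, Matrix.sub_apply,
    vecMulVec_apply, Pi.sub_apply, Matrix.of_apply, smul_eq_mul, Finset.sum_apply]
  have hK : ∀ i : Fin n, (∑ k ∈ Finset.univ.erase i, ncaP x U i k * ncaRder x U i k H)
      = ∑ a, ∑ b, 2 * ((∑ c, (∑ k ∈ Finset.univ.erase i, ncaP x U i k * ((x i a - x k a) * (x i c - x k c))) * U c b)) * H a b := by
    intro i
    simpa using key2 x U H i (Finset.univ.erase i) (fun j => ncaP x U i j)
  have hJ : ∀ i : Fin n, (∑ k ∈ S i, ncaP x U i k * ncaRder x U i k H)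
      = ∑ a, ∑ b, 2 * ((∑ c, (∑ j ∈ S i, ncaP x U i j * ((x i a - x j a) * (x i c - x j c))) * U c b)) * H a b := by
    intro i
    simpa using key2 x U H i (S i) (fun j => ncaP x U i j)
  have step1 : (∑ a, ∑ b, (2 * ∑ i, ∑ c, ((∑ j ∈ S i, ncaP x U i j) * ∑ k ∈ Finset.univ.erase i, ncaP x U i k * ((x i a - x k a) * (x i c - x k c)) - ∑ j ∈ S i, ncaP x U i j * ((x i a - x j a) * (x i c - x j c))) * U c b) * H a b)
      = ∑ i, ∑ a, ∑ b, (2 * ∑ c, ((∑ j ∈ S i, ncaP x U i j) * ∑ k ∈ Finset.univ.erase i, ncaP x U i k * ((x i a - x k a) * (x i c - x k c)) - ∑ j ∈ S i, ncaP x U i j * ((x i a - x j a) * (x i c - x j c))) * U c b) * H a b := by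
    calc (∑ a, ∑ b, (2 * ∑ i, ∑ c, ((∑ j ∈ S i, ncaP x U i j) * ∑ k ∈ Finset.univ.erase i, ncaP x U i k * ((x i a - x k a) * (x i c - x k c)) - ∑ j ∈ S i, ncaP x U i j * ((x i a - x j a) * (x i c - x j c))) * U c b) * H a b)
        = ∑ a, ∑ b, ∑ i, (2 * ∑ c, ((∑ j ∈ S i, ncaP x U i j) * ∑ k ∈ Finset.univ.erase i, ncaP x U i k * ((x i a - x k a) * (x i c - x k c)) - ∑ j ∈ S i, ncaP x U i j * ((x i a - x j a) * (x i c - x j c))) * U c b) * H a b := by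
          refine Finset.sum_congr rfl fun a _ => Finset.sum_congr rfl fun b _ => ?_
          rw [Finset.mul_sum, Finset.sum_mul]
      _ = ∑ a, ∑ i, ∑ b, (2 * ∑ c, ((∑ j ∈ S i, ncaP x U i j) * ∑ k ∈ Finset.univ.erase i, ncaP x U i k * ((x i a - x k a) * (x i c - x k c)) - ∑ j ∈ S i, ncaP x U i j * ((x i a - x j a) * (x i c - x j c))) * U c b) * H a b :=
          Finset.sum_congr rfl fun a _ => Finset.sum_comm
      _ = ∑ i, ∑ a, ∑ b, (2 * ∑ c, ((∑ j ∈ S i, ncaP x U i j) * ∑ k ∈ Finset.univ.erase i, ncaP x U i k * ((x i a - x k a) * (x i c - x k c)) - ∑ j ∈ S i, ncaP x U i j * ((x i a - x j a) * (x i c - x j c))) * U c b) * H a b := Finset.sum_comm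
  have step2 : ∀ i : Fin n, (∑ a, ∑ b, (2 * ∑ c, ((∑ j ∈ S i, ncaP x U i j) * ∑ k ∈ Finset.univ.erase i, ncaP x U i k * ((x i a - x k a) * (x i c - x k c)) - ∑ j ∈ S i, ncaP x U i j * ((x i a - x j a) * (x i c - x j c))) * U c b) * H a b)
      = (∑ j ∈ S i, ncaP x U i j) * (∑ a, ∑ b, 2 * ((∑ c, (∑ k ∈ Finset.univ.erase i, ncaP x U i k * ((x i a - x k a) * (x i c - x k c))) * U c b)) * H a b)
        - ∑ a, ∑ b, 2 * ((∑ c, (∑ j ∈ S i, ncaP x U i j * ((x i a - x j a) * (x i c - x j c))) * U c b)) * H a b := by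
    intro i
    have hc : ∀ a : Fin d, ∀ b : Fin p, (2 * ∑ c, ((∑ j ∈ S i, ncaP x U i j) * ∑ k ∈ Finset.univ.erase i, ncaP x U i k * ((x i a - x k a) * (x i c - x k c)) - ∑ j ∈ S i, ncaP x U i j * ((x i a - x j a) * (x i c - x j c))) * U c b) * H a b
        = (∑ j ∈ S i, ncaP x U i j) * (2 * ((∑ c, (∑ k ∈ Finset.univ.erase i, ncaP x U i k * ((x i a - x k a) * (x i c - x k c))) * U c b)) * H a b)
          - 2 * ((∑ c, (∑ j ∈ S i, ncaP x U i j * ((x i a - x j a) * (x i c - x j c))) * U c b)) * H a b := by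
      intro a b
      have h1 : (∑ c, ((∑ j ∈ S i, ncaP x U i j) * ∑ k ∈ Finset.univ.erase i, ncaP x U i k * ((x i a - x k a) * (x i c - x k c)) - ∑ j ∈ S i, ncaP x U i j * ((x i a - x j a) * (x i c - x j c))) * U c b)
          = (∑ j ∈ S i, ncaP x U i j) * (∑ c, (∑ k ∈ Finset.univ.erase i, ncaP x U i k * ((x i a - x k a) * (x i c - x k c))) * U c b) - ∑ c, (∑ j ∈ S i, ncaP x U i j * ((x i a - x j a) * (x i c - x j c))) * U c b := by
        rw [Finset.mul_sum, ← Finset.sum_sub_distrib]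
        exact Finset.sum_congr rfl fun c _ => by ring
      rw [h1]; ring
    calc (∑ a, ∑ b, (2 * ∑ c, ((∑ j ∈ S i, ncaP x U i j) * ∑ k ∈ Finset.univ.erase i, ncaP x U i k * ((x i a - x k a) * (x i c - x k c)) - ∑ j ∈ S i, ncaP x U i j * ((x i a - x j a) * (x i c - x j c))) * U c b) * H a b)
        = ∑ a, ∑ b, ((∑ j ∈ S i, ncaP x U i j) * (2 * ((∑ c, (∑ k ∈ Finset.univ.erase i, ncaP x U i k * ((x i a - x k a) * (x i c - x k c))) * U c b)) * H a b)
            - 2 * ((∑ c, (∑ j ∈ S i, ncaP x U i j * ((x i a - x j a) * (x i c - x j c))) * U c b)) * H a b) :=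
          Finset.sum_congr rfl fun a _ => Finset.sum_congr rfl fun b _ => hc a b
      _ = ∑ a, ((∑ j ∈ S i, ncaP x U i j) * (∑ b, 2 * ((∑ c, (∑ k ∈ Finset.univ.erase i, ncaP x U i k * ((x i a - x k a) * (x i c - x k c))) * U c b)) * H a b)
            - ∑ b, 2 * ((∑ c, (∑ j ∈ S i, ncaP x U i j * ((x i a - x j a) * (x i c - x j c))) * U c b)) * H a b) := by
          refine Finset.sum_congr rfl fun a _ => ?_
          rw [Finset.sum_sub_distrib, ← Finset.mul_sum]
      _ = (∑ j ∈ S i, ncaP x U i j) * (∑ a, ∑ b, 2 * ((∑ c, (∑ k ∈ Finset.univ.erase i, ncaP x U i k * ((x i a - x k a) * (x i c - x k c))) * U c b)) * H a b)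
            - ∑ a, ∑ b, 2 * ((∑ c, (∑ j ∈ S i, ncaP x U i j * ((x i a - x j a) * (x i c - x j c))) * U c b)) * H a b := by
          rw [Finset.sum_sub_distrib, ← Finset.mul_sum]
  rw [step1]
  refine Finset.sum_congr rfl fun i _ => ?_
  rw [hK i, hJ i]
  exact (step2 i).symm
end
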